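/- Let b ∈ L¹(ℝ, [0,∞)) be a weakly sub-exponential function on ℝ such that b(s+τ) ≤ K b(s) for s > ρ, τ > 0. Then for every n ≥ 2, lim_{s→∞} b^{∗n}(s)/b(s) = n (∫_ℝ b(τ) dτ)^{n−1}. -/

import Mathlib

open Filter MeasureTheory
open scoped Convolution

noncomputable def conv1 (f g : ℝ → ℝ) : ℝ → ℝ := fun s => ∫ τ, f (s - τ) * g τ

/-- `nconv1 f n = f^{*(n+1)}`, the (n+1)-fold convolution of `f`. -/
noncomputable def nconv1 (f : ℝ → ℝ) : ℕ → ℝ → ℝ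
  | 0 => f
  | n + 1 => conv1 f (nconv1 f n)

/-- A function is (right-side) long-tailed. -/
def LongTailed (b : ℝ → ℝ) : Prop :=
  (∃ ρ ≥ (0:ℝ), ∀ s ≥ ρ, 0 < b s) ∧
    ∀ τ ≥ (0:ℝ), Tendsto (fun s => b (s + τ) / b s) atTop (nhds 1)

/-- The normalized restriction of `b` to `ℝ₊`. -/
noncomputable def bplus (b : ℝ → ℝ) : ℝ → ℝ :=
  fun s => Set.indicator (Set.Ici (0:ℝ)) b s / ∫ τ in Set.Ici (0:ℝ), b τ

/-- `b` is weakly (right-side) sub-exponential on `ℝ`. -/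
def WeaklySubexp (b : ℝ → ℝ) : Prop :=
  LongTailed b ∧ IntegrableOn b (Set.Ici 0) ∧
    Tendsto (fun s => conv1 (bplus b) (bplus b) s / bplus b s) atTop (nhds 2)

namespace Stmt7Aux

open Set

/-- Bundled context of derived hypotheses. -/
structure Ctx where
  b : ℝ → ℝ
  K : ℝ
  R : ℝ
  hnn : ∀ s, 0 ≤ b s
  hint : Integrable b
  hR1 : 1 ≤ R
  hpos : ∀ s, R ≤ s → 0 < b s
  hK1 : 1 ≤ K
  hquasi : ∀ s, R ≤ s → ∀ τ, 0 ≤ τ → b (s + τ) ≤ K * b s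
  hlt : ∀ τ, 0 ≤ τ → Tendsto (fun s => b (s + τ) / b s) atTop (nhds 1)
  hsub : Tendsto (fun s => (∫ τ in Icc 0 s, b (s - τ) * b τ) / b s) atTop
      (nhds (2 * ∫ τ in Ici (0:ℝ), b τ))

namespace Ctx

variable (c : Ctx)

lemma meas : AEStronglyMeasurable c.b (volume : Measure ℝ) := c.hint.1

lemma measC (s : ℝ) : AEStronglyMeasurable (fun τ => c.b (s - τ)) (volume : Measure ℝ) :=
  ((Measure.measurePreserving_sub_left (volume : Measure ℝ) s).aestronglyMeasurable_comp_iff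
    (MeasurableEquiv.subLeft s).measurableEmbedding (g := c.b)).2 c.meas

lemma intC (s : ℝ) : Integrable (fun τ => c.b (s - τ)) :=
  (MeasurePreserving.integrable_comp_emb (Measure.measurePreserving_sub_left volume s)
    (MeasurableEquiv.subLeft s).measurableEmbedding).2 c.hint

/-- Global bound on the right tail. -/
lemma bdd (x : ℝ) (hx : c.R ≤ x) : c.b x ≤ c.K * c.b c.R := by
  have := c.hquasi c.R le_rfl (x - c.R) (by linarith)
  rwa [show c.R + (x - c.R) = x by ring] at this

/-- The left-shift ratio tends to one for every shift. -/
lemma ratio_sub (τ : ℝ) : Tendsto (fun s => c.b (s - τ) / c.b s) atTop (nhds 1) := by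
  rcases le_or_gt τ 0 with h | h
  · simpa [sub_eq_add_neg] using c.hlt (-τ) (by linarith)
  · have h1 : Tendsto (fun s => c.b ((s - τ) + τ) / c.b (s - τ)) atTop (nhds 1) :=
      (c.hlt τ h.le).comp (tendsto_atTop_add_const_right atTop (-τ) tendsto_id)
    have h2 : Tendsto (fun s => c.b s / c.b (s - τ)) atTop (nhds 1) := by
      simpa [sub_add_cancel] using h1
    simpa [inv_div] using h2.inv₀ one_ne_zero

/-- Eventual uniform domination of left shifts. -/
lemma ev_bound (A : ℝ) : ∀ᶠ s in atTop,
    0 < c.b s ∧ c.R ≤ s ∧ ∀ τ, τ ≤ A → c.b (s - τ) ≤ 2 * c.K * c.b s := by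
  have h2 : ∀ᶠ s in atTop, c.b (s - A) / c.b s < 2 :=
    (c.ratio_sub A).eventually_lt_const (by norm_num)
  filter_upwards [eventually_ge_atTop c.R, eventually_ge_atTop (A + c.R), h2] with s hs1 hs2 hs3
  have hbs : 0 < c.b s := c.hpos s hs1
  refine ⟨hbs, hs1, fun τ hτ => ?_⟩
  rcases le_or_gt τ 0 with hτ0 | hτ0
  · calc c.b (s - τ) = c.b (s + -τ) := by rw [sub_eq_add_neg]
    _ ≤ c.K * c.b s := c.hquasi s hs1 (-τ) (by linarith)
    _ ≤ 2 * c.K * c.b s := by nlinarith [c.hK1]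
  · have hsA : c.R ≤ s - A := by linarith
    have hAb : c.b (s - A) < 2 * c.b s := by rwa [div_lt_iff₀ hbs] at hs3
    calc c.b (s - τ) = c.b ((s - A) + (A - τ)) := by
          rw [show s - τ = (s - A) + (A - τ) by ring]
    _ ≤ c.K * c.b (s - A) := c.hquasi (s - A) hsA (A - τ) (by linarith)
    _ ≤ c.K * (2 * c.b s) := by nlinarith [c.hK1]
    _ = 2 * c.K * c.b s := by ring

/-- Integrability of the convolution integrand for large `s`. -/
lemma int_conv (g : ℝ → ℝ) (hg0 : ∀ t, 0 ≤ g t) (hgi : Integrable g)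
    (c' T₀ : ℝ) (hc' : 0 ≤ c') (hdom : ∀ t, T₀ ≤ t → g t ≤ c' * c.b t) :
    ∀ᶠ s in atTop, Integrable (fun τ => c.b (s - τ) * g τ) := by
  have hKR : (0:ℝ) ≤ c.K * c.b c.R := mul_nonneg (le_trans zero_le_one c.hK1) (c.hnn _)
  filter_upwards [eventually_ge_atTop (2 * max c.R T₀)] with s hs
  have hmeas : AEStronglyMeasurable (fun τ => c.b (s - τ) * g τ) volume :=
    (c.measC s).mul hgi.1
  have hhalf : max c.R T₀ ≤ s / 2 := by linarith
  rw [← integrableOn_univ, ← Iic_union_Ioi (a := s / 2)]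
  apply IntegrableOn.union
  · apply Integrable.mono (hgi.const_mul (c.K * c.b c.R)).integrableOn hmeas.restrict
    refine (ae_restrict_iff' measurableSet_Iic).2 (Filter.Eventually.of_forall fun τ hτ => ?_)
    have h1 : c.R ≤ s - τ := by
      have := le_trans (le_max_left c.R T₀) hhalf
      simp only [mem_Iic] at hτ; linarith
    have h2 : c.b (s - τ) ≤ c.K * c.b c.R := c.bdd _ h1
    rw [Real.norm_eq_abs, Real.norm_eq_abs, abs_of_nonneg (mul_nonneg (c.hnn _) (hg0 τ)),
      abs_of_nonneg (mul_nonneg hKR (hg0 τ))]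
    exact mul_le_mul_of_nonneg_right h2 (hg0 τ)
  · apply Integrable.mono ((c.intC s).const_mul (c' * (c.K * c.b c.R))).integrableOn
      hmeas.restrict
    refine (ae_restrict_iff' measurableSet_Ioi).2 (Filter.Eventually.of_forall fun τ hτ => ?_)
    simp only [mem_Ioi] at hτ
    have h1 : T₀ ≤ τ := le_trans (le_trans (le_max_right c.R T₀) hhalf) hτ.le
    have h2 : c.R ≤ τ := le_trans (le_trans (le_max_left c.R T₀) hhalf) hτ.le
    have h3 : g τ ≤ c' * (c.K * c.b c.R) :=
      le_trans (hdom τ h1) (mul_le_mul_of_nonneg_left (c.bdd τ h2) hc')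
    rw [Real.norm_eq_abs, Real.norm_eq_abs, abs_of_nonneg (mul_nonneg (c.hnn _) (hg0 τ)),
      abs_of_nonneg (mul_nonneg (mul_nonneg hc' hKR) (c.hnn _)), mul_comm (c' * (c.K * c.b c.R))]
    exact mul_le_mul_of_nonneg_left h3 (c.hnn _)

/-- Dominated convergence, left form. -/
lemma dctL (g : ℝ → ℝ) (hg0 : ∀ t, 0 ≤ g t) (hgi : Integrable g) (A : ℝ)
    (T : Set ℝ) (hT : MeasurableSet T) (hTA : T ⊆ Iic A) :
    Tendsto (fun s => (∫ τ in T, c.b (s - τ) * g τ) / c.b s) atTop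
      (nhds (∫ τ in T, g τ)) := by
  have key : Tendsto (fun s => ∫ τ in T, c.b (s - τ) * g τ / c.b s) atTop
      (nhds (∫ τ in T, g τ)) := by
    apply tendsto_integral_filter_of_dominated_convergence (bound := fun τ => 2 * c.K * g τ)
    · filter_upwards with s
      have hm := (((c.measC s).mul hgi.1).mul_const (c.b s)⁻¹).restrict
        (s := T)
      simpa [div_eq_mul_inv] using hm
    · filter_upwards [c.ev_bound A] with s hs
      refine (ae_restrict_iff' hT).2 (Filter.Eventually.of_forall fun τ hτT => ?_)
      obtain ⟨hbs, hsR, hb2⟩ := hs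
      have h1 : c.b (s - τ) ≤ 2 * c.K * c.b s := hb2 τ (hTA hτT)
      have h2 : 0 ≤ c.b (s - τ) * g τ / c.b s :=
        div_nonneg (mul_nonneg (c.hnn _) (hg0 τ)) (c.hnn s)
      rw [Real.norm_eq_abs, abs_of_nonneg h2, div_le_iff₀ hbs]
      nlinarith [c.hnn (s - τ), hg0 τ, c.hnn s]
    · exact ((hgi.const_mul (2 * c.K)).restrict)
    · refine Filter.Eventually.of_forall fun τ => ?_
      have : Tendsto (fun s => c.b (s - τ) / c.b s * g τ) atTop (nhds (1 * g τ)) :=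
        (c.ratio_sub τ).mul_const (g τ)
      simpa [mul_div_right_comm] using this
  simpa [integral_div] using key

/-- Dominated convergence, right form. -/
lemma dctR (g : ℝ → ℝ) (hg0 : ∀ t, 0 ≤ g t) (hgm : AEStronglyMeasurable g volume) (cL : ℝ)
    (hcL : Tendsto (fun t => g t / c.b t) atTop (nhds cL))
    (c' T₀ : ℝ) (hc' : 0 ≤ c') (hdom : ∀ t, T₀ ≤ t → g t ≤ c' * c.b t) (A : ℝ)
    (T : Set ℝ) (hT : MeasurableSet T) (hTA : T ⊆ Iic A) :
    Tendsto (fun s => (∫ u in T, c.b u * g (s - u)) / c.b s) atTop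
      (nhds (cL * ∫ u in T, c.b u)) := by
  have hgms : ∀ s : ℝ, AEStronglyMeasurable (fun u => g (s - u)) volume := fun s =>
    ((Measure.measurePreserving_sub_left (volume : Measure ℝ) s).aestronglyMeasurable_comp_iff
      (MeasurableEquiv.subLeft s).measurableEmbedding (g := g)).2 hgm
  have key : Tendsto (fun s => ∫ u in T, c.b u * g (s - u) / c.b s) atTop
      (nhds (∫ u in T, cL * c.b u)) := by
    apply tendsto_integral_filter_of_dominated_convergence
      (bound := fun u => 2 * c.K * c' * c.b u)
    · filter_upwards with s
      have hm := ((c.meas.mul (hgms s)).mul_const (c.b s)⁻¹).restrict (s := T)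
      simpa [div_eq_mul_inv] using hm
    · filter_upwards [c.ev_bound A, eventually_ge_atTop (T₀ + A)] with s hs hsT
      refine (ae_restrict_iff' hT).2 (Filter.Eventually.of_forall fun u hτT => ?_)
      obtain ⟨hbs, hsR, hb2⟩ := hs
      have huA : u ≤ A := hTA hτT
      have h1 : c.b (s - u) ≤ 2 * c.K * c.b s := hb2 u huA
      have hdg : g (s - u) ≤ c' * c.b (s - u) := hdom (s - u) (by linarith)
      have h2 : 0 ≤ c.b u * g (s - u) / c.b s :=
        div_nonneg (mul_nonneg (c.hnn _) (hg0 _)) (c.hnn s)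
      rw [Real.norm_eq_abs, abs_of_nonneg h2, div_le_iff₀ hbs]
      have hKpos : (0:ℝ) ≤ c.K := le_trans zero_le_one c.hK1
      have h3 : g (s - u) ≤ c' * (2 * c.K * c.b s) :=
        le_trans hdg (mul_le_mul_of_nonneg_left h1 hc')
      have h4 := mul_le_mul_of_nonneg_left h3 (c.hnn u)
      nlinarith [c.hnn u]
    · exact ((c.hint.const_mul (2 * c.K * c')).restrict)
    · refine Filter.Eventually.of_forall fun u => ?_
      have hs1 : Tendsto (fun s => g (s - u) / c.b (s - u)) atTop (nhds cL) :=
        hcL.comp (tendsto_atTop_add_const_right atTop (-u) tendsto_id)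
      have hs2 : Tendsto (fun s => g (s - u) / c.b (s - u) * (c.b (s - u) / c.b s))
          atTop (nhds (cL * 1)) := hs1.mul (c.ratio_sub u)
      have hs3 : Tendsto (fun s => g (s - u) / c.b s) atTop (nhds cL) := by
        rw [show cL = cL * 1 by ring]
        apply hs2.congr'
        filter_upwards [eventually_ge_atTop (c.R + u)] with s hsu
        have hpos : 0 < c.b (s - u) := c.hpos _ (by linarith)
        field_simp
      have h4 := hs3.const_mul (c.b u)
      rw [show cL * c.b u = c.b u * cL by ring]
      exact h4.congr fun s => (mul_div_assoc _ _ _).symm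
  have : Tendsto (fun s => (∫ u in T, c.b u * g (s - u)) / c.b s) atTop
      (nhds (∫ u in T, cL * c.b u)) := by
    apply key.congr
    intro s
    rw [integral_div]
  rwa [integral_const_mul] at this

/-- Reflection change of variables. -/
lemma reflInt (φ : ℝ → ℝ) (s : ℝ) (T : Set ℝ) (hT : MeasurableSet T) :
    (∫ τ in (fun τ => s - τ) ⁻¹' T, φ (s - τ)) = ∫ u in T, φ u :=
  MeasurePreserving.setIntegral_preimage_emb (Measure.measurePreserving_sub_left volume s)
    (MeasurableEquiv.subLeft s).measurableEmbedding φ T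

/-- The middle part of the self-convolution vanishes like the tail. -/
lemma middle (A : ℝ) (hA : c.R ≤ A) :
    Tendsto (fun s => (∫ τ in Ioo A (s - A), c.b (s - τ) * c.b τ) / c.b s) atTop
      (nhds (2 * ∫ τ in Ioi A, c.b τ)) := by
  have hA0 : (0:ℝ) < A := lt_of_lt_of_le one_pos (le_trans c.hR1 hA)
  have hK0 : (0:ℝ) ≤ c.K := le_trans zero_le_one c.hK1
  have hdomb : ∀ t, c.R ≤ t → c.b t ≤ c.K * c.b t := fun t _ =>
    le_mul_of_one_le_left (c.hnn t) c.hK1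
  have hone : Tendsto (fun t => c.b t / c.b t) atTop (nhds 1) := by
    apply Tendsto.congr' _ tendsto_const_nhds
    filter_upwards [eventually_ge_atTop c.R] with t ht
    rw [div_self (ne_of_gt (c.hpos t ht))]
  have hE1 := c.dctL c.b c.hnn c.hint A (Icc 0 A) measurableSet_Icc Icc_subset_Iic_self
  have hE2 := c.dctR c.b c.hnn c.meas 1 hone c.K c.R hK0 hdomb A (Icc 0 A)
    measurableSet_Icc Icc_subset_Iic_self
  have hflip : ∀ s : ℝ, (∫ τ in Icc (s - A) s, c.b (s - τ) * c.b τ)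
      = ∫ u in Icc 0 A, c.b u * c.b (s - u) := by
    intro s
    have hset : (fun τ => s - τ) ⁻¹' Icc 0 A = Icc (s - A) s := by
      ext x
      simp only [mem_preimage, mem_Icc]
      constructor <;> intro h <;> constructor <;> linarith [h.1, h.2]
    have := reflInt (fun u => c.b u * c.b (s - u)) s (Icc 0 A) measurableSet_Icc
    rw [hset] at this
    rw [← this]
    apply setIntegral_congr_fun measurableSet_Icc
    intro τ _
    simp only []
    rw [sub_sub_cancel, mul_comm]
  have hE2' : Tendsto (fun s => (∫ τ in Icc (s - A) s, c.b (s - τ) * c.b τ) / c.b s) atTop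
      (nhds (1 * ∫ u in Icc 0 A, c.b u)) := by
    apply hE2.congr
    intro s
    rw [hflip s]
  have hint_conv := c.int_conv c.b c.hnn c.hint c.K c.R hK0 hdomb
  have hsplit : ∀ᶠ s in atTop, (∫ τ in Icc 0 s, c.b (s - τ) * c.b τ)
      = (∫ τ in Icc 0 A, c.b (s - τ) * c.b τ) + (∫ τ in Ioo A (s - A), c.b (s - τ) * c.b τ)
        + ∫ τ in Icc (s - A) s, c.b (s - τ) * c.b τ := by
    filter_upwards [hint_conv, eventually_gt_atTop (2 * A)] with s hsi hs2A
    have e1 : Icc (0:ℝ) A ∪ Ioo A (s - A) = Ico 0 (s - A) := by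
      ext x
      simp only [mem_union, mem_Icc, mem_Ioo, mem_Ico]
      constructor
      · rintro (⟨h1, h2⟩ | ⟨h1, h2⟩) <;> constructor <;> linarith
      · rintro ⟨h1, h2⟩
        rcases le_or_gt x A with h | h
        · exact Or.inl ⟨h1, h⟩
        · exact Or.inr ⟨h, h2⟩
    have e2 : Ico (0:ℝ) (s - A) ∪ Icc (s - A) s = Icc 0 s := by
      ext x
      simp only [mem_union, mem_Ico, mem_Icc]
      constructor
      · rintro (⟨h1, h2⟩ | ⟨h1, h2⟩) <;> constructor <;> linarith
      · rintro ⟨h1, h2⟩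
        rcases lt_or_ge x (s - A) with h | h
        · exact Or.inl ⟨h1, h⟩
        · exact Or.inr ⟨h, h2⟩
    have d1 : Disjoint (Icc (0:ℝ) A) (Ioo A (s - A)) := by
      rw [Set.disjoint_left]
      intro x hx1 hx2
      exact absurd hx1.2 (not_le.2 hx2.1)
    have d2 : Disjoint (Ico (0:ℝ) (s - A)) (Icc (s - A) s) := by
      rw [Set.disjoint_left]
      intro x hx1 hx2
      exact absurd hx2.1 (not_le.2 hx1.2)
    calc (∫ τ in Icc 0 s, c.b (s - τ) * c.b τ)
        = ∫ τ in Ico 0 (s - A) ∪ Icc (s - A) s, c.b (s - τ) * c.b τ := by rw [e2]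
      _ = (∫ τ in Ico 0 (s - A), c.b (s - τ) * c.b τ)
          + ∫ τ in Icc (s - A) s, c.b (s - τ) * c.b τ :=
        setIntegral_union d2 measurableSet_Icc hsi.integrableOn hsi.integrableOn
      _ = (∫ τ in Icc 0 A ∪ Ioo A (s - A), c.b (s - τ) * c.b τ)
          + ∫ τ in Icc (s - A) s, c.b (s - τ) * c.b τ := by rw [e1]
      _ = _ := by
        rw [setIntegral_union d1 measurableSet_Ioo hsi.integrableOn hsi.integrableOn]
  have hIP : (∫ τ in Ici (0:ℝ), c.b τ)
      = (∫ τ in Icc 0 A, c.b τ) + ∫ τ in Ioi A, c.b τ := by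
    rw [← setIntegral_union ((Iic_disjoint_Ioi le_rfl).mono_left Icc_subset_Iic_self)
      measurableSet_Ioi c.hint.integrableOn c.hint.integrableOn,
      Icc_union_Ioi_eq_Ici hA0.le]
  have key := (c.hsub.sub hE1).sub hE2'
  have hval : 2 * (∫ τ in Ici (0:ℝ), c.b τ) - (∫ τ in Icc 0 A, c.b τ)
      - 1 * ∫ u in Icc 0 A, c.b u = 2 * ∫ τ in Ioi A, c.b τ := by
    rw [hIP]; ring
  rw [hval] at key
  apply key.congr'
  filter_upwards [hsplit] with s hsp
  rw [hsp]
  ring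

/-- Tail integrals tend to zero. -/
lemma tail0 (g : ℝ → ℝ) (hgi : Integrable g) :
    Tendsto (fun A => ∫ τ in Ioi A, g τ) atTop (nhds 0) := by
  have hIic : Tendsto (fun A : ℝ => ∫ τ in Iic A, g τ) atTop (nhds (∫ τ, g τ)) := by
    have h := tendsto_setIntegral_of_monotone (μ := volume) (f := g)
      (s := fun A : ℝ => Iic A) (fun A => measurableSet_Iic)
      (fun a b hab => Iic_subset_Iic.2 hab) ?_
    · rw [iUnion_Iic, setIntegral_univ] at h; exact h
    · rw [iUnion_Iic]; exact hgi.integrableOn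
  have key : ∀ A : ℝ, ∫ τ in Ioi A, g τ = (∫ τ, g τ) - ∫ τ in Iic A, g τ := by
    intro A
    rw [← intervalIntegral.integral_Iic_add_Ioi (b := A) hgi.integrableOn hgi.integrableOn]
    ring
  simp_rw [key]
  simpa using (tendsto_const_nhds (x := ∫ τ, g τ)).sub hIic

lemma gtail (g : ℝ → ℝ) (hgi : Integrable g) :
    Tendsto (fun A => ∫ τ in Iio A, g τ) atTop (nhds (∫ τ, g τ)) := by
  have h := tendsto_setIntegral_of_monotone (μ := volume) (f := g)
    (s := fun A : ℝ => Iio A) (fun A => measurableSet_Iio)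
    (fun a b hab => Iio_subset_Iio hab) ?_
  · rw [iUnion_Iio, setIntegral_univ] at h; exact h
  · rw [iUnion_Iio]; exact hgi.integrableOn

/-- epsilon-approximation criterion for limits. -/
lemma tendsto_of_approx {f : ℝ → ℝ} {L : ℝ}
    (h : ∀ ε > (0:ℝ), ∃ l : ℝ, |l - L| ≤ ε ∧ ∀ᶠ s in atTop, |f s - l| ≤ ε) :
    Tendsto f atTop (nhds L) := by
  rw [Metric.tendsto_nhds]
  intro ε hε
  obtain ⟨l, hl, hev⟩ := h (ε / 3) (by linarith)
  filter_upwards [hev] with s hs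
  rw [Real.dist_eq]
  calc |f s - L| ≤ |f s - l| + |l - L| := abs_sub_le _ _ _
  _ ≤ ε / 3 + ε / 3 := add_le_add hs hl
  _ < ε := by linarith

/-- The key convolution limit. -/
lemma engine (g : ℝ → ℝ) (hg0 : ∀ t, 0 ≤ g t) (hgi : Integrable g) (cL : ℝ)
    (hcL : Tendsto (fun t => g t / c.b t) atTop (nhds cL))
    (c' T₀ : ℝ) (hc' : 0 ≤ c') (hdom : ∀ t, T₀ ≤ t → g t ≤ c' * c.b t) :
    Tendsto (fun s => conv1 c.b g s / c.b s) atTop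
      (nhds ((∫ τ, g τ) + cL * ∫ τ, c.b τ)) := by
  have hK0 : (0:ℝ) ≤ c.K := le_trans zero_le_one c.hK1
  have hdomb : ∀ t, c.R ≤ t → c.b t ≤ c.K * c.b t := fun t _ =>
    le_mul_of_one_le_left (c.hnn t) c.hK1
  apply tendsto_of_approx
  intro ε hε
  have ev1 : ∀ᶠ A in atTop, |(∫ τ in Iio A, g τ) - ∫ τ, g τ| ≤ ε / 4 := by
    have h := Metric.tendsto_nhds.1 (gtail g hgi) (ε / 4) (by linarith)
    filter_upwards [h] with A hA
    rw [Real.dist_eq] at hA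
    exact hA.le
  have ev2 : ∀ᶠ A in atTop, |cL| * |(∫ τ in Iio A, c.b τ) - ∫ τ, c.b τ| ≤ ε / 4 := by
    have hpos : 0 < ε / 4 / (|cL| + 1) := by positivity
    have h := Metric.tendsto_nhds.1 (gtail c.b c.hint) _ hpos
    filter_upwards [h] with A hA
    rw [Real.dist_eq] at hA
    calc |cL| * |(∫ τ in Iio A, c.b τ) - ∫ τ, c.b τ|
        ≤ (|cL| + 1) * |(∫ τ in Iio A, c.b τ) - ∫ τ, c.b τ| := by
          apply mul_le_mul_of_nonneg_right (by linarith [abs_nonneg cL]) (abs_nonneg _)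
      _ ≤ (|cL| + 1) * (ε / 4 / (|cL| + 1)) := by
          apply mul_le_mul_of_nonneg_left hA.le (by linarith [abs_nonneg cL])
      _ = ε / 4 := by
          rw [mul_comm, div_mul_cancel₀ _ (ne_of_gt (by positivity : (0:ℝ) < |cL| + 1))]
  have ev3 : ∀ᶠ A in atTop, 2 * c' * ∫ τ in Ioi A, c.b τ < ε / 2 := by
    have h := ((tail0 c.b c.hint).const_mul (2 * c')).eventually_lt_const
      (show (2 * c') * 0 < ε / 2 by simpa using by linarith)
    simpa using h
  obtain ⟨A, hAR, hAT, hgA, hbA, htail⟩ :=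
    ((eventually_ge_atTop c.R).and ((eventually_ge_atTop T₀).and
      (ev1.and (ev2.and ev3)))).exists
  set gA := ∫ τ in Iio A, g τ with hgAdef
  set bA := ∫ τ in Iio A, c.b τ with hbAdef
  refine ⟨gA + cL * bA, ?_, ?_⟩
  · have : gA + cL * bA - ((∫ τ, g τ) + cL * ∫ τ, c.b τ)
        = (gA - ∫ τ, g τ) + cL * (bA - ∫ τ, c.b τ) := by ring
    rw [this]
    calc |(gA - ∫ τ, g τ) + cL * (bA - ∫ τ, c.b τ)|
        ≤ |gA - ∫ τ, g τ| + |cL * (bA - ∫ τ, c.b τ)| := abs_add_le _ _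
      _ ≤ ε / 4 + ε / 4 := by rw [abs_mul]; exact add_le_add hgA hbA
      _ ≤ ε := by linarith
  · -- eventual bound in s
    have hT1ev : ∀ᶠ s in atTop,
        |(∫ τ in Iio A, c.b (s - τ) * g τ) / c.b s - gA| ≤ ε / 4 := by
      have h := Metric.tendsto_nhds.1
        (c.dctL g hg0 hgi A (Iio A) measurableSet_Iio Iio_subset_Iic_self) (ε / 4) (by linarith)
      filter_upwards [h] with s hs
      rw [Real.dist_eq] at hs
      exact hs.le
    have hflip3 : ∀ s : ℝ, (∫ τ in Ioi (s - A), c.b (s - τ) * g τ)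
        = ∫ u in Iio A, c.b u * g (s - u) := by
      intro s
      have hset : (fun τ => s - τ) ⁻¹' Iio A = Ioi (s - A) := by
        ext x
        simp only [mem_preimage, mem_Iio, mem_Ioi]
        constructor <;> intro h <;> linarith
      have := reflInt (fun u => c.b u * g (s - u)) s (Iio A) measurableSet_Iio
      rw [hset] at this
      rw [← this]
      apply setIntegral_congr_fun measurableSet_Ioi
      intro τ _
      simp only []
      rw [sub_sub_cancel, mul_comm]
    have hT3tend : Tendsto (fun s => (∫ τ in Ioi (s - A), c.b (s - τ) * g τ) / c.b s)
        atTop (nhds (cL * bA)) := by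
      apply (c.dctR g hg0 hgi.1 cL hcL c' T₀ hc' hdom A (Iio A) measurableSet_Iio
        Iio_subset_Iic_self).congr
      intro s
      rw [hflip3 s]
    have hT3ev : ∀ᶠ s in atTop,
        |(∫ τ in Ioi (s - A), c.b (s - τ) * g τ) / c.b s - cL * bA| ≤ ε / 4 := by
      have h := Metric.tendsto_nhds.1 hT3tend (ε / 4) (by linarith)
      filter_upwards [h] with s hs
      rw [Real.dist_eq] at hs
      exact hs.le
    have hT2ev : ∀ᶠ s in atTop,
        c' * ((∫ τ in Ioo A (s - A), c.b (s - τ) * c.b τ) / c.b s) < ε / 2 := by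
      apply ((c.middle A hAR).const_mul c').eventually_lt_const
      rw [show c' * (2 * ∫ τ in Ioi A, c.b τ) = 2 * c' * ∫ τ in Ioi A, c.b τ by ring]
      exact htail
    filter_upwards [hT1ev, hT3ev, hT2ev, c.int_conv g hg0 hgi c' T₀ hc' hdom,
      c.int_conv c.b c.hnn c.hint c.K c.R hK0 hdomb,
      eventually_ge_atTop (2 * A), eventually_ge_atTop c.R] with s h1 h3 h2 hIg hIb hs2A hsR
    have hbs : 0 < c.b s := c.hpos s hsR
    have hsA : A ≤ s - A := by linarith
    -- split the convolution integral
    have e2 : (∫ τ in Ici A, c.b (s - τ) * g τ)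
        = (∫ τ in Icc A (s - A), c.b (s - τ) * g τ)
          + ∫ τ in Ioi (s - A), c.b (s - τ) * g τ := by
      rw [← setIntegral_union ((Iic_disjoint_Ioi le_rfl).mono_left Icc_subset_Iic_self)
        measurableSet_Ioi hIg.integrableOn hIg.integrableOn, Icc_union_Ioi_eq_Ici hsA]
    have hconv : conv1 c.b g s
        = (∫ τ in Iio A, c.b (s - τ) * g τ) + ((∫ τ in Icc A (s - A), c.b (s - τ) * g τ)
          + ∫ τ in Ioi (s - A), c.b (s - τ) * g τ) := by
      rw [← e2, intervalIntegral.integral_Iio_add_Ici hIg.integrableOn hIg.integrableOn]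
      rfl
    -- bound the middle term
    have hT2nn : 0 ≤ (∫ τ in Icc A (s - A), c.b (s - τ) * g τ) / c.b s :=
      div_nonneg (setIntegral_nonneg measurableSet_Icc
        (fun τ _ => mul_nonneg (c.hnn _) (hg0 _))) hbs.le
    have hT2le : (∫ τ in Icc A (s - A), c.b (s - τ) * g τ) / c.b s
        ≤ c' * ((∫ τ in Ioo A (s - A), c.b (s - τ) * c.b τ) / c.b s) := by
      have hmono : (∫ τ in Icc A (s - A), c.b (s - τ) * g τ)
          ≤ ∫ τ in Icc A (s - A), c' * (c.b (s - τ) * c.b τ) := by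
        apply setIntegral_mono_on hIg.integrableOn (hIb.const_mul c').integrableOn
          measurableSet_Icc
        intro τ hτ
        have hd := hdom τ (le_trans hAT hτ.1)
        have := mul_le_mul_of_nonneg_left hd (c.hnn (s - τ))
        nlinarith
      have heq : (∫ τ in Icc A (s - A), c' * (c.b (s - τ) * c.b τ))
          = c' * ∫ τ in Ioo A (s - A), c.b (s - τ) * c.b τ := by
        rw [integral_const_mul, integral_Icc_eq_integral_Ioo]
      rw [← mul_div_assoc, ← heq]
      exact div_le_div_of_nonneg_right hmono hbs.le
    -- assemble
    rw [hconv, add_div, add_div]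
    have hre : (∫ τ in Iio A, c.b (s - τ) * g τ) / c.b s
        + ((∫ τ in Icc A (s - A), c.b (s - τ) * g τ) / c.b s
          + (∫ τ in Ioi (s - A), c.b (s - τ) * g τ) / c.b s) - (gA + cL * bA)
        = ((∫ τ in Iio A, c.b (s - τ) * g τ) / c.b s - gA)
          + ((∫ τ in Ioi (s - A), c.b (s - τ) * g τ) / c.b s - cL * bA)
          + (∫ τ in Icc A (s - A), c.b (s - τ) * g τ) / c.b s := by ring
    rw [hre]
    calc |((∫ τ in Iio A, c.b (s - τ) * g τ) / c.b s - gA)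
          + ((∫ τ in Ioi (s - A), c.b (s - τ) * g τ) / c.b s - cL * bA)
          + (∫ τ in Icc A (s - A), c.b (s - τ) * g τ) / c.b s|
        ≤ |((∫ τ in Iio A, c.b (s - τ) * g τ) / c.b s - gA)
          + ((∫ τ in Ioi (s - A), c.b (s - τ) * g τ) / c.b s - cL * bA)|
          + |(∫ τ in Icc A (s - A), c.b (s - τ) * g τ) / c.b s| := abs_add_le _ _
      _ ≤ |(∫ τ in Iio A, c.b (s - τ) * g τ) / c.b s - gA|
          + |(∫ τ in Ioi (s - A), c.b (s - τ) * g τ) / c.b s - cL * bA|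
          + |(∫ τ in Icc A (s - A), c.b (s - τ) * g τ) / c.b s| :=
        add_le_add_left (abs_add_le _ _) _
      _ ≤ ε / 4 + ε / 4 + (ε / 2) := by
        refine add_le_add (add_le_add h1 h3) ?_
        rw [abs_of_nonneg hT2nn]
        exact le_of_lt (lt_of_le_of_lt hT2le h2)
      _ = ε := by ring

/-- The full inductive package. -/
lemma main (n : ℕ) : (∀ s, 0 ≤ nconv1 c.b n s) ∧ Integrable (nconv1 c.b n) ∧
    (∫ τ, nconv1 c.b n τ) = (∫ τ, c.b τ) ^ (n + 1) ∧
    Tendsto (fun s => nconv1 c.b n s / c.b s) atTop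
      (nhds (((n : ℝ) + 1) * (∫ τ, c.b τ) ^ n)) := by
  have hI0 : 0 ≤ ∫ τ, c.b τ := integral_nonneg c.hnn
  induction n with
  | zero =>
    refine ⟨c.hnn, c.hint, (pow_one _).symm, ?_⟩
    have : Tendsto (fun s : ℝ => (1:ℝ)) atTop (nhds 1) := tendsto_const_nhds
    have h2 : Tendsto (fun s => c.b s / c.b s) atTop (nhds 1) := by
      apply Tendsto.congr' _ this
      filter_upwards [eventually_ge_atTop c.R] with s hs
      rw [div_self (ne_of_gt (c.hpos s hs))]
    simpa [nconv1] using h2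
  | succ n ih =>
    obtain ⟨hg0, hgi, hgint, hgt⟩ := ih
    set g := nconv1 c.b n with hgdef
    set I := ∫ τ, c.b τ with hIdef
    set cL : ℝ := ((n : ℝ) + 1) * I ^ n with hcLdef
    have hcL0 : 0 ≤ cL := by positivity
    have hconv : nconv1 c.b (n + 1) = conv1 c.b g := rfl
    have hconv2 : conv1 c.b g = (g ⋆[ContinuousLinearMap.mul ℝ ℝ, volume] c.b) := by
      funext s
      show ∫ τ, c.b (s - τ) * g τ = ∫ t, g t * c.b (s - t)
      exact integral_congr_ae (Filter.Eventually.of_forall fun τ => mul_comm _ _)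
    have hki : Integrable (conv1 c.b g) := by
      rw [hconv2]; exact hgi.integrable_convolution _ c.hint
    have hint2 : (∫ τ, conv1 c.b g τ) = I ^ (n + 1 + 1) := by
      rw [hconv2]
      rw [integral_convolution _ hgi c.hint]
      show (∫ x, g x) * I = I ^ (n + 1 + 1)
      rw [hgint]
      ring
    -- domination
    have hev : ∀ᶠ t in atTop, g t ≤ (cL + 1) * c.b t := by
      have h1 : ∀ᶠ t in atTop, g t / c.b t < cL + 1 := hgt.eventually_lt_const (lt_add_one cL)
      filter_upwards [h1, eventually_ge_atTop c.R] with t h2 h3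
      have hbt : 0 < c.b t := c.hpos t h3
      rw [div_lt_iff₀ hbt] at h2
      linarith
    obtain ⟨T₀, hT₀⟩ := eventually_atTop.1 hev
    have heng := c.engine g hg0 hgi cL hgt (cL + 1) T₀ (by linarith) hT₀
    refine ⟨?_, ?_, ?_, ?_⟩
    · intro s
      exact integral_nonneg fun τ => mul_nonneg (c.hnn _) (hg0 _)
    · rw [hconv]; exact hki
    · rw [hconv]; exact hint2
    · rw [hconv]
      have hval : (∫ τ, g τ) + cL * I = ((n : ℝ) + 1 + 1) * I ^ (n + 1) := by
        rw [hgint, hcLdef]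
        ring
      have hc2 : ((n:ℝ) + 1 + 1) = ((n + 1 : ℕ) : ℝ) + 1 := by push_cast; ring
      rw [hc2] at hval
      rw [← hval]
      exact heng

end Ctx

end Stmt7Aux

open Set

theorem stmt_7 (b : ℝ → ℝ) (hnn : ∀ s, 0 ≤ b s) (hint : Integrable b)
    (hb : WeaklySubexp b)
    (K ρ : ℝ) (hK : 0 < K) (hρ : 0 < ρ)
    (hquasi : ∀ s > ρ, ∀ τ > (0:ℝ), b (s + τ) ≤ K * b s) :
    ∀ n : ℕ, 2 ≤ n →
      Tendsto (fun s => nconv1 b (n - 1) s / b s) atTop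
        (nhds ((n : ℝ) * (∫ τ, b τ) ^ (n - 1))) := by
  classical
  obtain ⟨⟨⟨ρ₀, hρ₀0, hpos⟩, hlt⟩, hintp, hsubx⟩ := hb
  -- the working constants
  set K' : ℝ := max K 1 with hK'def
  set R : ℝ := max ρ ρ₀ + 1 with hRdef
  have hR1 : 1 ≤ R := by
    have : (0:ℝ) ≤ max ρ ρ₀ := le_trans hρ₀0 (le_max_right _ _)
    linarith
  have hRρ : ρ < R := by
    have := le_max_left ρ ρ₀
    linarith
  have hRρ₀ : ρ₀ ≤ R := by
    have := le_max_right ρ ρ₀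
    linarith
  have hpos' : ∀ s, R ≤ s → 0 < b s := fun s hs => hpos s (le_trans hRρ₀ hs)
  have hK1' : 1 ≤ K' := le_max_right _ _
  have hquasi' : ∀ s, R ≤ s → ∀ τ, 0 ≤ τ → b (s + τ) ≤ K' * b s := by
    intro s hs τ hτ
    rcases eq_or_lt_of_le hτ with h | h
    · rw [← h, add_zero]
      exact le_mul_of_one_le_left (hnn s) hK1'
    · exact le_trans (hquasi s (lt_of_lt_of_le hRρ hs) τ h)
        (mul_le_mul_of_nonneg_right (le_max_left _ _) (hnn s))
  -- positivity of the half-line integral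
  set Ip : ℝ := ∫ τ in Ici (0:ℝ), b τ with hIpdef
  have hIp : 0 < Ip := by
    have hiff := setIntegral_pos_iff_support_of_nonneg_ae (μ := volume) (s := Ici (0:ℝ))
      (f := b) (Filter.Eventually.of_forall fun τ => hnn τ) hintp
    rw [hIpdef, hiff]
    have hsub2 : Ici R ⊆ Function.support b ∩ Ici 0 := by
      intro x hx
      rw [mem_Ici] at hx
      exact ⟨ne_of_gt (hpos' x hx), mem_Ici.2 (le_trans (by linarith) hx)⟩
    have := measure_mono (μ := (volume : Measure ℝ)) hsub2
    rw [Real.volume_Ici] at this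
    exact lt_of_lt_of_le (by simp) this
  -- translate weak subexponentiality
  have hfx : ∀ x : ℝ, bplus b x = Set.indicator (Ici 0) b x / Ip := fun x => rfl
  have hDeq : ∀ s : ℝ, conv1 (bplus b) (bplus b) s
      = (∫ τ in Icc 0 s, b (s - τ) * b τ) / (Ip * Ip) := by
    intro s
    have hpt : ∀ τ : ℝ, bplus b (s - τ) * bplus b τ
        = Set.indicator (Icc 0 s) (fun τ => b (s - τ) * b τ) τ / (Ip * Ip) := by
      intro τ
      rw [hfx, hfx, div_mul_div_comm]
      congr 1
      by_cases h1 : τ ∈ Icc (0:ℝ) s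
      · rw [mem_Icc] at h1
        rw [Set.indicator_of_mem (mem_Ici.2 (by linarith [h1.2] : (0:ℝ) ≤ s - τ)),
          Set.indicator_of_mem (mem_Ici.2 h1.1),
          Set.indicator_of_mem (mem_Icc.2 h1)]
      · rw [Set.indicator_of_notMem h1]
        rw [mem_Icc, not_and_or] at h1
        rcases h1 with h2 | h2
        · rw [Set.indicator_of_notMem (show τ ∉ Ici (0:ℝ) by simpa [mem_Ici] using h2),
            mul_zero]
        · rw [not_le] at h2
          rw [Set.indicator_of_notMem
            (show s - τ ∉ Ici (0:ℝ) by rw [mem_Ici]; push_neg; linarith), zero_mul]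
    unfold conv1
    simp_rw [hpt]
    rw [integral_div, integral_indicator measurableSet_Icc]
  have hsubD : Tendsto (fun s => (∫ τ in Icc 0 s, b (s - τ) * b τ) / b s) atTop
      (nhds (2 * Ip)) := by
    have h2 := hsubx.const_mul Ip
    rw [show Ip * 2 = 2 * Ip by ring] at h2
    apply Tendsto.congr' _ h2
    filter_upwards [eventually_ge_atTop R] with s hs
    have hbs : 0 < b s := hpos' s hs
    have hs0 : (0:ℝ) ≤ s := le_trans (by linarith) hs
    rw [hDeq s, hfx s, Set.indicator_of_mem (mem_Ici.2 hs0)]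
    field_simp
  -- build the context
  set c : Stmt7Aux.Ctx := ⟨b, K', R, hnn, hint, hR1, hpos', hK1', hquasi', hlt, hsubD⟩
    with hcdef
  intro n hn
  obtain ⟨-, -, -, ht⟩ := c.main (n - 1)
  have hcast : ((n - 1 : ℕ) : ℝ) + 1 = (n : ℝ) := by
    have h1 : n - 1 + 1 = n := by omega
    calc ((n - 1 : ℕ) : ℝ) + 1 = ((n - 1 + 1 : ℕ) : ℝ) := by push_cast; ring
    _ = (n : ℝ) := by rw [h1]
  rw [hcast] at ht
  exact ht
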